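/- Let Z be a measurable space, D a probability distribution on Z, W a set, and f : W × Z → ℝ measurable and bounded. For each k let w̃ : Z^k → W be a symmetric learning rule, i.e. invariant under permutation of its arguments. Assume the rule is leave-one-out β(m)-stable: for all z_1, …, z_m ∈ Z, | f(w̃(z_1,…,z_{m−1}), z_m) − f(w̃(z_1,…,z_m), z_m) | ≤ β(m). Then for z_1, …, z_m drawn i.i.d. from D, E[ f(w̃(z_1,…,z_{m−1}), z_m) ] ≤ E[ (1/m) Σ_{i=1}^m f(w̃(z_1,…,z_m), z_i) ] + β(m). -/

import Mathlib

open MeasureTheory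

/-- Stability implies generalization: if a symmetric learning rule is leave-one-out
`β(m)`-stable, then its expected population risk (trained on `m − 1` points, evaluated
on a fresh point) is at most its expected empirical risk on `m` points plus `β(m)`.
Here `m = n + 1`. -/
theorem stability_implies_generalization
    {Z : Type*} [MeasurableSpace Z] {W : Type*} [MeasurableSpace W]
    (μ : Measure Z) [IsProbabilityMeasure μ]
    (f : W → Z → ℝ)
    (hfmeas : Measurable (Function.uncurry f))
    (C : ℝ) (hfbdd : ∀ w z, |f w z| ≤ C)
    (n : ℕ)
    (A : (k : ℕ) → (Fin k → Z) → W)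
    (hAmeas : ∀ k, Measurable (A k))
    (hAsymm : ∀ k (σ : Equiv.Perm (Fin k)) (z : Fin k → Z), A k (z ∘ σ) = A k z)
    (β : ℕ → ℝ) (hβ : Antitone β)
    (hstable : ∀ z : Fin (n + 1) → Z,
      |f (A n fun i => z i.castSucc) (z (Fin.last n)) -
          f (A (n + 1) z) (z (Fin.last n))| ≤ β (n + 1)) :
    (∫ z : Fin (n + 1) → Z, f (A n fun i => z i.castSucc) (z (Fin.last n))
        ∂Measure.pi fun _ => μ) ≤
      (∫ z : Fin (n + 1) → Z, (1 / (n + 1) : ℝ) * ∑ i, f (A (n + 1) z) (z i)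
        ∂Measure.pi fun _ => μ) + β (n + 1) := by
  set π : Measure (Fin (n + 1) → Z) := Measure.pi fun _ => μ with hπ
  have hmeas_i : ∀ i : Fin (n + 1),
      Measurable (fun z : Fin (n + 1) → Z => f (A (n + 1) z) (z i)) := fun i =>
    hfmeas.comp ((hAmeas (n + 1)).prodMk (measurable_pi_apply i))
  have hint_i : ∀ i : Fin (n + 1),
      Integrable (fun z : Fin (n + 1) → Z => f (A (n + 1) z) (z i)) π := fun i => by
    refine (integrable_const C).mono' (hmeas_i i).aestronglyMeasurable ?_
    filter_upwards with z using by simpa [Real.norm_eq_abs] using hfbdd _ _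
  have hmeasL : Measurable (fun z : Fin (n + 1) → Z =>
      f (A n fun i => z i.castSucc) (z (Fin.last n))) := by
    have h1 : Measurable (fun z : Fin (n + 1) → Z => (fun i : Fin n => z i.castSucc)) :=
      measurable_pi_lambda _ fun i => measurable_pi_apply _
    exact hfmeas.comp (((hAmeas n).comp h1).prodMk (measurable_pi_apply _))
  have hintL : Integrable (fun z : Fin (n + 1) → Z =>
      f (A n fun i => z i.castSucc) (z (Fin.last n))) π := by
    refine (integrable_const C).mono' hmeasL.aestronglyMeasurable ?_
    filter_upwards with z using by simpa [Real.norm_eq_abs] using hfbdd _ _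
  -- each summand has the same integral as the last-coordinate one, by exchangeability
  have hswap : ∀ i : Fin (n + 1),
      ∫ z, f (A (n + 1) z) (z i) ∂π = ∫ z, f (A (n + 1) z) (z (Fin.last n)) ∂π := by
    intro i
    set σ : Equiv.Perm (Fin (n + 1)) := Equiv.swap i (Fin.last n) with hσ
    have hmp : MeasurePreserving (MeasurableEquiv.piCongrLeft (π := fun _ : Fin (n + 1) => Z) σ) π π :=
      measurePreserving_piCongrLeft (fun _ : Fin (n + 1) => μ) σ
    have := hmp.integral_comp' (fun z => f (A (n + 1) z) (z (Fin.last n)))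
    rw [← this]
    refine integral_congr_ae (Filter.Eventually.of_forall fun z => ?_)
    have hT : (MeasurableEquiv.piCongrLeft (π := fun _ : Fin (n + 1) => Z) σ) z = z ∘ σ.symm := by
      ext j
      simp [MeasurableEquiv.piCongrLeft, Equiv.piCongrLeft_apply_eq_cast]
    simp only [hT]
    simp only [hT, hAsymm (n + 1) σ.symm z, Function.comp_apply, hσ, Equiv.symm_swap,
      Equiv.swap_apply_right]
    rw [hAsymm (n + 1) (Equiv.swap i (Fin.last n)) z]
  -- the empirical-risk integral equals the last-coordinate integral
  have hemp : (∫ z, (1 / (n + 1) : ℝ) * ∑ i, f (A (n + 1) z) (z i) ∂π)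
      = ∫ z, f (A (n + 1) z) (z (Fin.last n)) ∂π := by
    rw [integral_const_mul, integral_finset_sum _ (fun i _ => hint_i i)]
    have : ∀ i ∈ Finset.univ, (∫ z, f (A (n + 1) z) (z i) ∂π)
        = ∫ z, f (A (n + 1) z) (z (Fin.last n)) ∂π := fun i _ => hswap i
    rw [Finset.sum_congr rfl this, Finset.sum_const, Finset.card_univ, Fintype.card_fin,
      nsmul_eq_mul]
    field_simp
    push_cast
    ring
  rw [hemp]
  calc (∫ z, f (A n fun i => z i.castSucc) (z (Fin.last n)) ∂π)
      ≤ ∫ z, f (A (n + 1) z) (z (Fin.last n)) + β (n + 1) ∂π := by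
        refine integral_mono hintL ((hint_i (Fin.last n)).add (integrable_const _)) fun z => ?_
        have := hstable z
        have h2 := abs_le.1 this
        linarith [h2.2]
    _ = (∫ z, f (A (n + 1) z) (z (Fin.last n)) ∂π) + β (n + 1) := by
        rw [integral_add (hint_i (Fin.last n)) (integrable_const _), integral_const]
        simp
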